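/- Let P be a slant irreducible finite Γ-colored d-complete poset with top tree T, and assume Γ is simply laced. If T contains more than one element, then T is not a chain. -/

import Mathlib

/-!
Common definitions: Dynkin diagram data, Γ-colored posets, and the coloring
properties EC, NA, AC, ICE2, UCB1, LCB1 from the paper, together with
Γ-colored d-complete and Γ-colored minuscule posets, top trees, slant
irreducibility, extensions, lower frontier censuses, and full heaps.
-/

universe u v w

variable {Γ : Type u} {P : Type v}

/-- The integers `θ a b` form a Dynkin diagram datum. -/
def DynkinDatum (θ : Γ → Γ → ℤ) : Prop :=
  (∀ a : Γ, θ a a = 2) ∧ (∀ a b : Γ, a ≠ b → θ a b ≤ 0) ∧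
    (∀ a b : Γ, a ≠ b → (θ a b = 0 ↔ θ b a = 0))

/-- Colors `a` and `b` are adjacent. -/
def AdjColor (θ : Γ → Γ → ℤ) (a b : Γ) : Prop := θ a b < 0

/-- The Dynkin diagram is simply laced. -/
def SimplyLaced (θ : Γ → Γ → ℤ) : Prop :=
  ∀ a b : Γ, a ≠ b → θ a b = 0 ∨ θ a b = -1

/-- All closed intervals are finite. -/
def LocallyFinitePoset (α : Type*) [PartialOrder α] : Prop :=
  ∀ x y : α, (Set.Icc x y).Finite

/-- A poset is connected if it cannot be written as a disjoint union of two nonempty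
subposets with no comparabilities between them. -/
def ConnectedPoset (α : Type*) [PartialOrder α] : Prop :=
  ∀ S : Set α, S.Nonempty → Sᶜ.Nonempty → ∃ x ∈ S, ∃ y ∈ Sᶜ, x ≤ y ∨ y ≤ x

section
variable [PartialOrder P]

/-- (EC) Elements with equal colors are comparable. -/
def ColoredEC (κ : P → Γ) : Prop := ∀ x y : P, κ x = κ y → x ≤ y ∨ y ≤ x

/-- (NA) Neighbors have adjacent colors. -/
def ColoredNA (θ : Γ → Γ → ℤ) (κ : P → Γ) : Prop :=
  ∀ x y : P, x ⋖ y → AdjColor θ (κ x) (κ y)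

/-- (AC) Elements with adjacent colors are comparable. -/
def ColoredAC (θ : Γ → Γ → ℤ) (κ : P → Γ) : Prop :=
  ∀ x y : P, AdjColor θ (κ x) (κ y) → x ≤ y ∨ y ≤ x

/-- (ICE2) Between consecutive elements of a color `a`, the census of colors
adjacent to `a` is two. -/
def ColoredICE2 (θ : Γ → Γ → ℤ) (κ : P → Γ) : Prop :=
  ∀ (a : Γ) (x y : P), κ x = a → κ y = a → x < y → (∀ z ∈ Set.Ioo x y, κ z ≠ a) →
    (∑ᶠ z ∈ Set.Ioo x y, -θ (κ z) a) = 2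

/-- `U(x,P)`: elements above `x` with color adjacent to that of `x`. -/
def USet (θ : Γ → Γ → ℤ) (κ : P → Γ) (x : P) : Set P :=
  {y : P | x < y ∧ AdjColor θ (κ y) (κ x)}

/-- `L(x,P)`: elements below `x` with color adjacent to that of `x`. -/
def LSet (θ : Γ → Γ → ℤ) (κ : P → Γ) (x : P) : Set P :=
  {y : P | y < x ∧ AdjColor θ (κ y) (κ x)}

/-- (UCB1) Upper frontier census bound. -/
def ColoredUCB1 (θ : Γ → Γ → ℤ) (κ : P → Γ) : Prop :=
  ∀ x : P, (∀ y : P, κ y = κ x → ¬x < y) →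
    (USet θ κ x).Finite ∧ (∑ᶠ y ∈ USet θ κ x, -θ (κ y) (κ x)) ≤ 1

/-- (LCB1) Lower frontier census bound. -/
def ColoredLCB1 (θ : Γ → Γ → ℤ) (κ : P → Γ) : Prop :=
  ∀ x : P, (∀ y : P, κ y = κ x → ¬y < x) →
    (LSet θ κ x).Finite ∧ (∑ᶠ y ∈ LSet θ κ x, -θ (κ y) (κ x)) ≤ 1

/-- A Γ-colored d-complete poset: locally finite, surjectively colored, and
satisfying EC, NA, AC, ICE2, and UCB1. -/
def GColoredDComplete (θ : Γ → Γ → ℤ) (κ : P → Γ) : Prop :=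
  LocallyFinitePoset P ∧ Function.Surjective κ ∧ ColoredEC κ ∧ ColoredNA θ κ ∧
    ColoredAC θ κ ∧ ColoredICE2 θ κ ∧ ColoredUCB1 θ κ

/-- A Γ-colored minuscule poset: Γ-colored d-complete and LCB1. -/
def GColoredMinuscule (θ : Γ → Γ → ℤ) (κ : P → Γ) : Prop :=
  GColoredDComplete θ κ ∧ ColoredLCB1 θ κ

/-- The top tree: the set of elements maximal in their color class. -/
def TopTree (κ : P → Γ) : Set P := {x : P | ∀ y : P, κ y = κ x → ¬x < y}

/-- `x` is covered by `y` within the subposet `S`. -/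
def CoversIn (S : Set P) (x y : P) : Prop :=
  x ∈ S ∧ y ∈ S ∧ x < y ∧ ∀ z ∈ S, x < z → ¬z < y

/-- Slant irreducibility of a Γ-colored d-complete poset. -/
def SlantIrreducible (κ : P → Γ) : Prop :=
  ConnectedPoset P ∧ ∀ x y : P, CoversIn (TopTree κ) x y → ∃ z : P, z ≠ y ∧ κ z = κ y

/-- A saturated chain in a subposet `S`: a chain that is convex in `S`. -/
def SaturatedChainIn (S C : Set P) : Prop :=
  C ⊆ S ∧ IsChain (· ≤ ·) C ∧ ∀ x ∈ C, ∀ y ∈ C, ∀ z ∈ S, x < z → z < y → z ∈ C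

/-- The lower frontier census at the element `y`. -/
noncomputable def LCensus (θ : Γ → Γ → ℤ) (κ : P → Γ) (y : P) : ℤ :=
  ∑ᶠ x ∈ LSet θ κ y, -θ (κ x) (κ y)

/-- A full heap: locally finite, surjectively colored, EC, NA, AC, ICE2, and every
color class order-isomorphic to ℤ. -/
def FullHeap (θ : Γ → Γ → ℤ) (κ : P → Γ) : Prop :=
  LocallyFinitePoset P ∧ Function.Surjective κ ∧ ColoredEC κ ∧ ColoredNA θ κ ∧
    ColoredAC θ κ ∧ ColoredICE2 θ κ ∧ ∀ a : Γ, Nonempty ({x : P // κ x = a} ≃o ℤ)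

end

/-- `ι` realizes the colored poset `A` as an order filter of the colored poset `B`. -/
def FilterEmbedding {G : Type*} {A B : Type*} [PartialOrder A] [PartialOrder B]
    (κ : A → G) (κ' : B → G) (ι : A → B) : Prop :=
  (∀ p q : A, ι p ≤ ι q ↔ p ≤ q) ∧ (∀ p : A, κ' (ι p) = κ p) ∧ IsUpperSet (Set.range ι)

/-- `B` is an extension of `A` by the color `a`, with extending element `x`. -/
def IsExtensionBy {G : Type*} {A B : Type*} [PartialOrder A] [PartialOrder B]
    (θ : G → G → ℤ) (κ : A → G) (κ' : B → G) (a : G) (ι : A → B) (x : B) : Prop :=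
  Finite B ∧ GColoredDComplete θ κ' ∧ ConnectedPoset B ∧
    FilterEmbedding κ κ' ι ∧ (Set.range ι)ᶜ = {x} ∧ κ' x = a

section AuxLemmas

variable {Γ : Type u} {P : Type v}

lemma adjNe {θ : Γ → Γ → ℤ} (hθ : DynkinDatum θ) {a b : Γ} (h : AdjColor θ a b) : a ≠ b := by
  rintro rfl
  have := hθ.1 a
  unfold AdjColor at h
  omega

lemma adjSymm {θ : Γ → Γ → ℤ} (hθ : DynkinDatum θ) {a b : Γ} (h : AdjColor θ a b) :
    AdjColor θ b a := by
  obtain ⟨h2, hle, h0⟩ := hθ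
  have hab : a ≠ b := adjNe ⟨h2, hle, h0⟩ h
  have hbne : θ b a ≠ 0 := fun hz => (ne_of_lt h) ((h0 a b hab).mpr hz)
  exact lt_of_le_of_ne (hle b a hab.symm) hbne

lemma adjVal {θ : Γ → Γ → ℤ} (hθ : DynkinDatum θ) (hsl : SimplyLaced θ) {a b : Γ}
    (h : AdjColor θ a b) : θ a b = -1 := by
  rcases hsl a b (adjNe hθ h) with h0 | h1
  · exfalso; unfold AdjColor at h; omega
  · exact h1

lemma finsetExistsMaximal {α : Type*} [Preorder α] (s : Finset α) (h : s.Nonempty) :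
    ∃ m ∈ s, ∀ x ∈ s, ¬m < x := by
  obtain ⟨m, hm, hmax⟩ := s.exists_maximal h
  exact ⟨m, hm, fun x hx hlt => hlt.not_ge (hmax hx hlt.le)⟩

lemma finsetExistsMinimal {α : Type*} [Preorder α] (s : Finset α) (h : s.Nonempty) :
    ∃ m ∈ s, ∀ x ∈ s, ¬x < m := by
  obtain ⟨m, hm, hmin⟩ := s.exists_minimal h
  exact ⟨m, hm, fun x hx hlt => hlt.not_ge (hmin hx hlt.le)⟩

variable [PartialOrder P] [Fintype P]

lemma existsGreatest {κ : P → Γ} (hEC : ColoredEC κ) (z : P) :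
    ∃ m : P, κ m = κ z ∧ ∀ y, κ y = κ z → y ≤ m := by
  classical
  obtain ⟨m, hm, hmax⟩ :=
    finsetExistsMaximal (Finset.univ.filter fun y => κ y = κ z) ⟨z, by simp⟩
  have hmκ : κ m = κ z := (Finset.mem_filter.mp hm).2
  refine ⟨m, hmκ, fun y hy => ?_⟩
  rcases hEC y m (by rw [hy, hmκ]) with h | h
  · exact h
  · exact le_of_eq (h.lt_or_eq.resolve_left (hmax y (by simp [hy]))).symm

lemma existsCoverLe {u v : P} (h : u < v) :
    ∃ w, w ≤ v ∧ u < w ∧ ∀ c, u < c → ¬c < w := by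
  classical
  have hfin : (Set.Ioc u v).Finite := Set.toFinite _
  obtain ⟨w, hw, hmin⟩ := finsetExistsMinimal hfin.toFinset
    ⟨v, hfin.mem_toFinset.mpr ⟨h, le_rfl⟩⟩
  rw [Set.Finite.mem_toFinset] at hw
  refine ⟨w, hw.2, hw.1, fun c hc hcw => ?_⟩
  exact hmin c (hfin.mem_toFinset.mpr ⟨hc, hcw.le.trans hw.2⟩) hcw

lemma usetEq {θ : Γ → Γ → ℤ} {κ : P → Γ} (hθ : DynkinDatum θ) (hsl : SimplyLaced θ)
    (hUCB : ColoredUCB1 θ κ) {u q : P}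
    (hmaxu : ∀ y, κ y = κ u → ¬u < y) (hq : q ∈ USet θ κ u) :
    ∀ y ∈ USet θ κ u, y = q := by
  classical
  obtain ⟨hfin, hsum⟩ := hUCB u hmaxu
  rw [finsum_mem_eq_finite_toFinset_sum _ hfin] at hsum
  have hterm : ∀ y ∈ hfin.toFinset, -θ (κ y) (κ u) = 1 := by
    intro y hy
    have hadj := (hfin.mem_toFinset.mp hy).2
    have := adjVal hθ hsl hadj
    omega
  rw [Finset.sum_congr rfl hterm] at hsum
  simp only [Finset.sum_const, nsmul_eq_mul, mul_one] at hsum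
  have hcard : hfin.toFinset.card ≤ 1 := by exact_mod_cast hsum
  intro y hy
  by_contra hne
  have h2 : 1 < hfin.toFinset.card :=
    Finset.one_lt_card.mpr ⟨y, hfin.mem_toFinset.mpr hy, q, hfin.mem_toFinset.mpr hq, hne⟩
  omega

lemma keyLemma {θ : Γ → Γ → ℤ} {κ : P → Γ} (hθ : DynkinDatum θ) (hsl : SimplyLaced θ)
    (hdc : GColoredDComplete θ κ) (hchain : IsChain (· ≤ ·) (TopTree κ)) :
    ∀ n : ℕ, ∀ p q : P, (Set.Iio q).ncard < n → κ p = κ q → p < q →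
      (∀ z ∈ Set.Ioo p q, κ z ≠ κ q) →
      (∀ y : P, q < y → AdjColor θ (κ y) (κ q) → ∀ z ∈ Set.Ioo p q, κ z ≠ κ y) →
      False := by
  classical
  obtain ⟨hlf, hsur, hEC, hNA, hAC, hICE, hUCB⟩ := hdc
  intro n
  induction n with
  | zero => intro p q hn _ _ _ _; exact absurd hn (Nat.not_lt_zero _)
  | succ n ih =>
    intro p q hn hpq hlt hcons hkey
    have hsum := hICE (κ q) p q hpq rfl hlt hcons
    have hfin : (Set.Ioo p q).Finite := Set.toFinite _
    rw [finsum_mem_eq_finite_toFinset_sum _ hfin] at hsum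
    have hsplit : ∀ z ∈ hfin.toFinset,
        -θ (κ z) (κ q) = if AdjColor θ (κ z) (κ q) then (1 : ℤ) else 0 := by
      intro z hz
      have hzmem := hfin.mem_toFinset.mp hz
      have hne : κ z ≠ κ q := hcons z hzmem
      rcases hsl (κ z) (κ q) hne with h0 | h1
      · simp [AdjColor, h0]
      · simp [AdjColor, h1]
    rw [Finset.sum_congr rfl hsplit, Finset.sum_boole] at hsum
    set A := hfin.toFinset.filter (fun z => AdjColor θ (κ z) (κ q)) with hA
    have hcard : A.card = 2 := by exact_mod_cast hsum
    obtain ⟨z1, z2, hz12, hAeq⟩ := Finset.card_eq_two.mp hcard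
    have hmemA : ∀ z : P, z ∈ A ↔ z ∈ Set.Ioo p q ∧ AdjColor θ (κ z) (κ q) := by
      intro z
      simp [hA, Finset.mem_filter, hfin.mem_toFinset]
    have hz1 : z1 ∈ Set.Ioo p q ∧ AdjColor θ (κ z1) (κ q) := by
      rw [← hmemA, hAeq]; simp
    have hz2 : z2 ∈ Set.Ioo p q ∧ AdjColor θ (κ z2) (κ q) := by
      rw [← hmemA, hAeq]; simp
    have hmemA' : ∀ z : P, z ∈ Set.Ioo p q → AdjColor θ (κ z) (κ q) → z = z1 ∨ z = z2 := by
      intro z hzo hza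
      have : z ∈ A := (hmemA z).mpr ⟨hzo, hza⟩
      rw [hAeq] at this
      simpa using this
    -- the greatest element of the color of any z ∈ A is z1 or z2
    have hmaxmem : ∀ z ∈ Set.Ioo p q, AdjColor θ (κ z) (κ q) →
        ∃ m, κ m = κ z ∧ (∀ y, κ y = κ z → y ≤ m) ∧ (m = z1 ∨ m = z2) := by
      intro z hzIoo hzadj
      obtain ⟨m, hmκ, hmge⟩ := existsGreatest hEC z
      have hadjm : AdjColor θ (κ m) (κ q) := by rw [hmκ]; exact hzadj
      have hmq : m < q := by
        rcases hAC m q hadjm with h | h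
        · rcases h.lt_or_eq with h' | h'
          · exact h'
          · exact absurd (congrArg κ h') (adjNe hθ hadjm)
        · rcases h.lt_or_eq with h' | h'
          · exact absurd hmκ.symm (hkey m h' hadjm z hzIoo)
          · exact absurd (congrArg κ h'.symm) (adjNe hθ hadjm)
      have hmIoo : m ∈ Set.Ioo p q := ⟨lt_of_lt_of_le hzIoo.1 (hmge z rfl), hmq⟩
      exact ⟨m, hmκ, hmge, hmemA' m hmIoo hadjm⟩
    obtain ⟨m1, hm1κ, hm1ge, hm1mem⟩ := hmaxmem z1 hz1.1 hz1.2
    obtain ⟨m2, hm2κ, hm2ge, hm2mem⟩ := hmaxmem z2 hz2.1 hz2.2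
    by_cases hcol : κ z1 = κ z2
    · -- equal colors: descend
      have inner : ∀ u v : P, u ∈ Set.Ioo p q → v ∈ Set.Ioo p q → u < v →
          κ u = κ v → AdjColor θ (κ v) (κ q) → False := by
        intro u v huo hvo huv hκuv hvadj
        -- v is the greatest element of its color
        obtain ⟨m, hmκ, hmge, hmmem⟩ := hmaxmem v hvo hvadj
        have hvm : v ≤ m := hmge v rfl
        have hmv : m = v := by
          have hv' := hmemA' v hvo hvadj
          have hu' := hmemA' u huo (by rw [hκuv]; exact hvadj)
          rcases hmmem with hm' | hm' <;> rcases hv' with hv'' | hv''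
          · exact hm'.trans hv''.symm
          · rcases hu' with hu'' | hu''
            · exact absurd (lt_of_lt_of_le huv hvm) (by rw [hm', ← hu'']; exact lt_irrefl _)
            · exact absurd huv (by rw [hu'', ← hv'']; exact lt_irrefl _)
          · rcases hu' with hu'' | hu''
            · exact absurd huv (by rw [hu'', ← hv'']; exact lt_irrefl _)
            · exact absurd (lt_of_lt_of_le huv hvm) (by rw [hm', ← hu'']; exact lt_irrefl _)
          · exact hm'.trans hv''.symm
        rw [hmv] at hmge
        have hmaxv : ∀ y, κ y = κ v → ¬v < y := fun y hy => (hmge y hy).not_gt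
        have hqU : q ∈ USet θ κ v := ⟨hvo.2, adjSymm hθ hvadj⟩
        have husets := usetEq hθ hsl hUCB hmaxv hqU
        have hmeas : (Set.Iio v).ncard < n := by
          have hss : Set.Iio v ⊂ Set.Iio q := by
            constructor
            · exact fun w hw => lt_trans hw hvo.2
            · intro hsub
              exact absurd (hsub hvo.2) (lt_irrefl v)
          have := Set.ncard_lt_ncard hss (Set.toFinite _)
          omega
        refine ih u v hmeas hκuv huv ?_ ?_
        · intro z hz hzv
          have hzo : z ∈ Set.Ioo p q := ⟨lt_trans huo.1 hz.1, lt_trans hz.2 hvo.2⟩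
          have hzadj : AdjColor θ (κ z) (κ q) := by rw [hzv]; exact hvadj
          have hz' := hmemA' z hzo hzadj
          have hu' := hmemA' u huo (by rw [hκuv]; exact hvadj)
          have hv' := hmemA' v hvo hvadj
          rcases hz' with hza | hza <;> rcases hu' with hua | hua <;>
            rcases hv' with hva | hva <;>
            first
              | exact absurd hz.1 (by rw [hza, ← hua]; exact lt_irrefl _)
              | exact absurd hz.2 (by rw [hza, ← hva]; exact lt_irrefl _)
              | exact absurd huv (by rw [hua, ← hva]; exact lt_irrefl _)
        · intro y hy hyadj z hz hzy
          have hyq : y = q := husets y ⟨hy, hyadj⟩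
          have hzo : z ∈ Set.Ioo p q := ⟨lt_trans huo.1 hz.1, lt_trans hz.2 hvo.2⟩
          exact hcons z hzo (by rw [hzy, hyq])
      have hcomp := hEC z1 z2 hcol
      rcases hcomp with h | h
      · exact inner z1 z2 hz1.1 hz2.1 (h.lt_of_ne hz12) hcol hz2.2
      · exact inner z2 z1 hz2.1 hz1.1 (h.lt_of_ne hz12.symm) hcol.symm hz1.2
    · -- distinct colors: z1, z2 are both tops, comparable by the chain, contradiction
      have hm1 : m1 = z1 := by
        rcases hm1mem with rfl | rfl
        · rfl
        · exact absurd hm1κ.symm hcol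
      have hm2 : m2 = z2 := by
        rcases hm2mem with rfl | rfl
        · exact absurd hm2κ hcol
        · rfl
      rw [hm1] at hm1ge
      rw [hm2] at hm2ge
      have hz1T : z1 ∈ TopTree κ := by
        intro y hy
        exact (hm1ge y hy).not_gt
      have hz2T : z2 ∈ TopTree κ := by
        intro y hy
        exact (hm2ge y hy).not_gt
      have inner2 : ∀ u v : P, u ∈ Set.Ioo p q → v ∈ Set.Ioo p q →
          (∀ y, κ y = κ u → y ≤ u) → AdjColor θ (κ u) (κ q) → u < v → False := by
        intro u v huo hvo huge huadj huv
        have hmaxu : ∀ y, κ y = κ u → ¬u < y := fun y hy => (huge y hy).not_gt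
        have hqU : q ∈ USet θ κ u := ⟨huo.2, adjSymm hθ huadj⟩
        have husets := usetEq hθ hsl hUCB hmaxu hqU
        obtain ⟨w, hwv, huw, hwcov⟩ := existsCoverLe huv
        have hcov : u ⋖ w := ⟨huw, fun c hc hcw => hwcov c hc hcw⟩
        have hadj := hNA u w hcov
        have hwU : w ∈ USet θ κ u := ⟨huw, adjSymm hθ hadj⟩
        have := husets w hwU
        rw [this] at hwv
        exact absurd hvo.2 (hwv.not_gt)
      rcases hchain hz1T hz2T hz12 with h | h
      · exact inner2 z1 z2 hz1.1 hz2.1 hm1ge hz1.2 (h.lt_of_ne hz12)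
      · exact inner2 z2 z1 hz2.1 hz1.1 hm2ge hz2.2 (h.lt_of_ne hz12.symm)

end AuxLemmas

/-- The top tree of a slant irreducible finite Γ-colored d-complete
poset with Γ simply laced and more than one element is not a chain. -/
theorem topTree_not_chain [Fintype Γ] [PartialOrder P] [Fintype P] [Nonempty P]
    (θ : Γ → Γ → ℤ) (κ : P → Γ) (hθ : DynkinDatum θ) (hsl : SimplyLaced θ)
    (hdc : GColoredDComplete θ κ) (hsi : SlantIrreducible κ)
    (hnt : (TopTree κ).Nontrivial) :
    ¬IsChain (· ≤ ·) (TopTree κ) := by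
  classical
  intro hchain
  have hEC := hdc.2.2.1
  have hTfin : (TopTree κ : Set P).Finite := Set.toFinite _
  obtain ⟨u0, hu0, v0, hv0, huv⟩ := hnt
  obtain ⟨t, htmem, htmax⟩ :=
    finsetExistsMaximal hTfin.toFinset ⟨u0, hTfin.mem_toFinset.mpr hu0⟩
  have htT : t ∈ TopTree κ := hTfin.mem_toFinset.mp htmem
  have htgreat : ∀ w ∈ TopTree κ, w ≤ t := by
    intro w hw
    rcases eq_or_ne w t with rfl | hne
    · exact le_rfl
    · rcases hchain hw htT hne with h | h
      · exact h
      · exact absurd (h.lt_of_ne hne.symm) (htmax w (hTfin.mem_toFinset.mpr hw))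
  have htop : ∀ w : P, w ≤ t := by
    intro w
    obtain ⟨m, hmκ, hmge⟩ := existsGreatest hEC w
    have hmT : m ∈ TopTree κ := by
      intro y hy
      rw [hmκ] at hy
      exact (hmge y hy).not_gt
    exact le_trans (hmge w rfl) (htgreat m hmT)
  have hex : ∃ s0 ∈ TopTree κ, s0 < t := by
    rcases eq_or_ne u0 t with rfl | h
    · exact ⟨v0, hv0, (htgreat v0 hv0).lt_of_ne (Ne.symm huv)⟩
    · exact ⟨u0, hu0, (htgreat u0 hu0).lt_of_ne h⟩
  obtain ⟨s0, hs0T, hs0t⟩ := hex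
  obtain ⟨s, hsmem, hsmax⟩ := finsetExistsMaximal
    (hTfin.toFinset.filter (· < t))
    ⟨s0, Finset.mem_filter.mpr ⟨hTfin.mem_toFinset.mpr hs0T, hs0t⟩⟩
  have hsT : s ∈ TopTree κ := hTfin.mem_toFinset.mp (Finset.mem_filter.mp hsmem).1
  have hst : s < t := (Finset.mem_filter.mp hsmem).2
  have hcov : CoversIn (TopTree κ) s t := by
    refine ⟨hsT, htT, hst, fun z hz hsz hzt => ?_⟩
    exact hsmax z (Finset.mem_filter.mpr ⟨hTfin.mem_toFinset.mpr hz, hzt⟩) hsz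
  obtain ⟨z0, hz0ne, hz0κ⟩ := hsi.2 s t hcov
  have hz0lt : z0 < t := (htop z0).lt_of_ne hz0ne
  obtain ⟨x, hxmem, hxmax⟩ := finsetExistsMaximal
    (Finset.univ.filter fun y => κ y = κ t ∧ y < t)
    ⟨z0, Finset.mem_filter.mpr ⟨Finset.mem_univ _, hz0κ, hz0lt⟩⟩
  have hx : κ x = κ t ∧ x < t := (Finset.mem_filter.mp hxmem).2
  have hxge : ∀ y, κ y = κ t → y < t → y ≤ x := by
    intro y hy hyt
    rcases hEC y x (by rw [hy, hx.1]) with h | h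
    · exact h
    · exact le_of_eq (h.lt_or_eq.resolve_left
        (hxmax y (Finset.mem_filter.mpr ⟨Finset.mem_univ _, hy, hyt⟩))).symm
  refine keyLemma hθ hsl hdc hchain ((Set.Iio t).ncard + 1) x t (by omega) hx.1 hx.2 ?_ ?_
  · intro z hz hzκ
    exact absurd (hxge z hzκ hz.2) (hz.1.not_ge)
  · intro y hy _ _ _ _
    exact absurd hy ((htop y).not_gt)
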